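/- Let α ∈ (0,1], let g : ℕ^E → ℝ be monotone and α-weakly submodular, let c be nonnegative linear, let τ_α ∈ ℝ, and let x, x* ∈ ℕ^E with x̄ = (x* − x) ∨ 0. Suppose that for every e ∈ E with x̄(e) > 0 there exists y_e ≤ x with g(y_e + χ_e) − g(y_e) − (1+α)·c(χ_e) < τ_α. Then α·(g(x*) − g(x)) ≤ τ_α·x̄(E) + (1+α)·c(x*); equivalently, g(x) ≥ g(x*) − ((1+α)/α)·c(x*) − (τ_α/α)·x̄(E). (Lower bound on g at the output of the αG−C streaming algorithm from the rejection conditions.) -/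
import Mathlib


/-- Lower bound on g at the output of the αG−C streaming algorithm from the
rejection conditions. -/
theorem stmt_9 {E : Type*} [Fintype E] [DecidableEq E]
    (α : ℝ) (hα0 : 0 < α) (hα1 : α ≤ 1)
    (g c : (E → ℕ) → ℝ)
    (hmono : Monotone g)
    (hws : ∀ s t : E → ℕ, s ≤ t → ∀ e : E,
      α * (g (t + Pi.single e 1) - g t) ≤ g (s + Pi.single e 1) - g s)
    (w : E → ℝ) (hw : ∀ e, 0 ≤ w e)
    (hc : ∀ x : E → ℕ, c x = ∑ e, w e * (x e : ℝ))
    (τα : ℝ) (x xstar : E → ℕ)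
    (xbar : E → ℕ) (hxbar : ∀ e, xbar e = xstar e - x e)
    (hrej : ∀ e : E, 0 < xbar e → ∃ y : E → ℕ, y ≤ x ∧
      g (y + Pi.single e 1) - g y - (1 + α) * c (Pi.single e 1) < τα) :
    α * (g xstar - g x) ≤ τα * (∑ e, (xbar e : ℝ)) + (1 + α) * c xstar ∧
    g x ≥ g xstar - ((1 + α) / α) * c xstar
      - (τα / α) * (∑ e, (xbar e : ℝ)) := by
  have key : ∀ n : ℕ, ∀ z : E → ℕ, (∑ e, z e) ≤ n → z ≤ xbar →
      α * (g (x + z) - g x) ≤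
        ∑ f, (z f : ℝ) * (τα + (1 + α) * c (Pi.single f 1)) := by
    intro n
    induction n with
    | zero =>
      intro z hz _
      have hz0 : z = 0 := by
        funext f
        have := Finset.sum_eq_zero_iff.mp (Nat.le_zero.mp hz)
        exact this f (Finset.mem_univ f)
      subst hz0
      simp
    | succ n ih =>
      intro z hz hzle
      by_cases h0 : z = 0
      · subst h0; simp
      · obtain ⟨e, he⟩ : ∃ e, 0 < z e := by
          by_contra h
          push_neg at h
          exact h0 (funext fun f => Nat.le_zero.mp (h f))
        set z' : E → ℕ := z - Pi.single e 1 with hz'def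
        have hz'f : ∀ f, z' f = z f - (if f = e then 1 else 0) := by
          intro f
          simp [hz'def, Pi.single_apply]
        have hsum' : ∑ f, z' f ≤ n := by
          have h1 : ∑ f, z' f + 1 ≤ ∑ f, z f := by
            have : ∑ f, z f = ∑ f, z' f + ∑ f, (if f = e then 1 else 0) := by
              rw [← Finset.sum_add_distrib]
              apply Finset.sum_congr rfl
              intro f _
              rw [hz'f f]
              by_cases hf : f = e
              · subst hf; simp; omega
              · simp [hf]
            rw [this]
            simp
          omega
        have hle' : z' ≤ xbar := fun f => le_trans (Nat.sub_le _ _) (hzle f)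
        have hxz : x + z = (x + z') + Pi.single e 1 := by
          funext f
          simp only [Pi.add_apply, Pi.single_apply]
          rw [hz'f f]
          by_cases hf : f = e
          · simp [hf]; omega
          · simp [hf]
        obtain ⟨y, hy, hrej'⟩ := hrej e (lt_of_lt_of_le he (hzle e))
        have hyle : y ≤ x + z' := le_trans hy (fun f => Nat.le_add_right _ _)
        have hws' := hws y (x + z') hyle e
        have step : α * (g (x + z) - g (x + z')) ≤
            τα + (1 + α) * c (Pi.single e 1) := by
          rw [hxz]
          calc α * (g ((x + z') + Pi.single e 1) - g (x + z'))
              ≤ g (y + Pi.single e 1) - g y := hws'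
            _ ≤ τα + (1 + α) * c (Pi.single e 1) := by linarith
        have ihz := ih z' hsum' hle'
        have rhs_eq : ∑ f, (z f : ℝ) * (τα + (1 + α) * c (Pi.single f 1)) =
            (∑ f, (z' f : ℝ) * (τα + (1 + α) * c (Pi.single f 1)))
              + (τα + (1 + α) * c (Pi.single e 1)) := by
          have hcast : ∀ f, (z f : ℝ) = (z' f : ℝ) + (if f = e then 1 else 0) := by
            intro f
            rw [hz'f f]
            by_cases hf : f = e
            · simp [hf]
              have : 1 ≤ z e := he
              push_cast [Nat.cast_sub this]
              ring
            · simp [hf]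
          calc ∑ f, (z f : ℝ) * (τα + (1 + α) * c (Pi.single f 1))
              = ∑ f, ((z' f : ℝ) * (τα + (1 + α) * c (Pi.single f 1))
                  + (if f = e then 1 else 0) * (τα + (1 + α) * c (Pi.single f 1))) := by
                apply Finset.sum_congr rfl
                intro f _
                rw [hcast f]; ring
            _ = _ := by
                rw [Finset.sum_add_distrib]
                congr 1
                simp [Finset.sum_ite_eq']
        rw [rhs_eq]
        linarith
  have hxx : xstar ≤ x + xbar := by
    intro f
    have h := hxbar f
    simp only [Pi.add_apply]
    omega
  have h1 : g xstar ≤ g (x + xbar) := hmono hxx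
  have h2 := key (∑ e, xbar e) xbar le_rfl le_rfl
  have hce : ∀ e, c (Pi.single e 1) = w e := by
    intro e
    rw [hc]
    simp [Pi.single_apply]
  have hsum : ∑ f, (xbar f : ℝ) * (τα + (1 + α) * c (Pi.single f 1)) =
      τα * (∑ e, (xbar e : ℝ)) + (1 + α) * ∑ e, (xbar e : ℝ) * w e := by
    simp only [hce]
    rw [Finset.mul_sum, Finset.mul_sum, ← Finset.sum_add_distrib]
    apply Finset.sum_congr rfl
    intro f _
    ring
  have hcw : ∑ e, (xbar e : ℝ) * w e ≤ c xstar := by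
    rw [hc]
    apply Finset.sum_le_sum
    intro e _
    have hb : xbar e ≤ xstar e := by rw [hxbar]; omega
    have hb' : (xbar e : ℝ) ≤ (xstar e : ℝ) := by exact_mod_cast hb
    nlinarith [hw e]
  have hα1' : (0:ℝ) ≤ 1 + α := by linarith
  have first : α * (g xstar - g x) ≤ τα * (∑ e, (xbar e : ℝ)) + (1 + α) * c xstar := by
    have h3 : α * (g xstar - g x) ≤ α * (g (x + xbar) - g x) := by
      nlinarith
    have h4 := h2
    rw [hsum] at h4
    nlinarith
  refine ⟨first, ?_⟩
  have hdiv : (g xstar - g x) ≤ (τα * (∑ e, (xbar e : ℝ)) + (1 + α) * c xstar) / α := by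
    rw [le_div_iff₀ hα0]
    linarith [first]
  have heq : (τα * (∑ e, (xbar e : ℝ)) + (1 + α) * c xstar) / α =
      (τα / α) * (∑ e, (xbar e : ℝ)) + ((1 + α) / α) * c xstar := by
    field_simp
  rw [heq] at hdiv
  linarith
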